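/- Let A ⊆ ℝ^N be measurable with finite Lebesgue measure. For each n let (u_n, D_n, f_n) be an a.e. approximately differentiable triple on A, and let (u, D, f) be an a.e. approximately differentiable triple on A such that x ↦ |det(f x)| is integrable on A. Assume the sequence (x ↦ |det(f_n x)|)_n is equi-integrable on A. Let E ⊆ A be measurable and suppose that u_n → u almost everywhere on E and that liminf_{n→∞} volume(u_n(E ∩ D_n)) ≥ volume(u(E ∩ D)). Then volume((u_n(E ∩ D_n)) Δ (u(E ∩ D))) → 0 as n → ∞; equivalently, the indicator functions of u_n(E ∩ D_n) converge in L¹(ℝ^N) to the indicator function of u(E ∩ D). (No injectivity and no sign condition on the Jacobians is assumed here.) -/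

import Mathlib

open MeasureTheory Filter Topology Set
open scoped ENNReal NNReal

noncomputable section

abbrev Euc (N : ℕ) := EuclideanSpace ℝ (Fin N)

/-- An a.e. approximately differentiable map on `A`, encoded as a triple `(u, D, f)`. -/
def ApproxDiffTriple {N : ℕ} (A D : Set (Euc N)) (u : Euc N → Euc N)
    (f : Euc N → Euc N →L[ℝ] Euc N) : Prop :=
  MeasurableSet D ∧ D ⊆ A ∧ volume (A \ D) = 0 ∧ ∀ x ∈ D, HasFDerivWithinAt u (f x) D x

/-- An admissible deformation on `Ω` (the class `𝒴(Ω)` of the paper). -/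
def AdmissibleDef {N : ℕ} (Ω D : Set (Euc N)) (y : Euc N → Euc N)
    (f : Euc N → Euc N →L[ℝ] Euc N) : Prop :=
  ApproxDiffTriple Ω D y f ∧ Set.InjOn y D ∧ (∀ x ∈ D, 0 < (f x).det) ∧
    IntegrableOn (fun x => (f x).det) Ω volume

/-- Weak convergence in `L¹(Ω)`, tested against bounded measurable functions. -/
def WeakL1ConvOn {N : ℕ} (Ω : Set (Euc N)) (u : ℕ → Euc N → ℝ) (v : Euc N → ℝ) : Prop :=
  ∀ g : Euc N → ℝ, Measurable g → (∃ C : ℝ, ∀ x, |g x| ≤ C) →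
    Tendsto (fun n => ∫ x in Ω, u n x * g x) atTop (𝓝 (∫ x in Ω, v x * g x))


lemma image_vol_le {N : ℕ} {D S : Set (Euc N)} {u : Euc N → Euc N}
    {f : Euc N → Euc N →L[ℝ] Euc N}
    (hd : ∀ x ∈ D, HasFDerivWithinAt u (f x) D x) (hS : MeasurableSet S) (hSD : S ⊆ D) :
    volume (u '' S) ≤ ∫⁻ x in S, ENNReal.ofReal |(f x).det| :=
  addHaar_image_le_lintegral_abs_det_fderiv volume hS fun x hx => (hd x (hSD hx)).mono hSD

lemma contOn_of_deriv {N : ℕ} {D : Set (Euc N)} {u : Euc N → Euc N}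
    {f : Euc N → Euc N →L[ℝ] Euc N}
    (hd : ∀ x ∈ D, HasFDerivWithinAt u (f x) D x) : ContinuousOn u D :=
  fun x hx => (hd x hx).continuousWithinAt

lemma image_nullMeasurable {N : ℕ} {D S : Set (Euc N)} {u : Euc N → Euc N}
    {f : Euc N → Euc N →L[ℝ] Euc N}
    (hd : ∀ x ∈ D, HasFDerivWithinAt u (f x) D x) (hS : MeasurableSet S) (hSD : S ⊆ D)
    (hfin : volume S ≠ ∞) : NullMeasurableSet (u '' S) volume := by
  have hcont : ContinuousOn u S := (contOn_of_deriv hd).mono hSD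
  have hex : ∀ j : ℕ, ∃ K, K ⊆ S ∧ IsCompact K ∧ volume (S \ K) < (j : ℝ≥0∞)⁻¹ := fun j =>
    hS.exists_isCompact_diff_lt hfin (ENNReal.inv_ne_zero.mpr (ENNReal.natCast_ne_top j))
  choose K hKS hKcomp hKvol using hex
  set Z := S \ ⋃ j, K j with hZdef
  have hZ0 : volume Z = 0 := by
    have hle : ∀ j : ℕ, volume Z ≤ (j : ℝ≥0∞)⁻¹ := fun j =>
      (measure_mono (diff_subset_diff_right (subset_iUnion K j))).trans (hKvol j).le
    exact le_antisymm (ge_of_tendsto' ENNReal.tendsto_inv_nat_nhds_zero hle) zero_le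
  have hZm : MeasurableSet Z := hS.diff (MeasurableSet.iUnion fun j => (hKcomp j).measurableSet)
  have hZD : Z ⊆ D := fun x hx => hSD hx.1
  have himZ : volume (u '' Z) = 0 := by
    have := image_vol_le hd hZm hZD
    rwa [setLIntegral_measure_zero _ _ hZ0, nonpos_iff_eq_zero] at this
  have hSplit : u '' S = (⋃ j, u '' K j) ∪ u '' Z := by
    apply le_antisymm
    · rintro y ⟨x, hx, rfl⟩
      by_cases hxK : x ∈ ⋃ j, K j
      · rcases mem_iUnion.mp hxK with ⟨j, hj⟩
        exact Or.inl (mem_iUnion.mpr ⟨j, mem_image_of_mem _ hj⟩)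
      · exact Or.inr (mem_image_of_mem _ ⟨hx, hxK⟩)
    · rintro y (hy | hy)
      · rcases mem_iUnion.mp hy with ⟨j, x, hx, rfl⟩
        exact mem_image_of_mem _ (hKS j hx)
      · rcases hy with ⟨x, hx, rfl⟩
        exact mem_image_of_mem _ hx.1
  rw [hSplit]
  exact (MeasurableSet.iUnion fun j =>
    ((hKcomp j).image_of_continuousOn (hcont.mono (hKS j))).isClosed.measurableSet).nullMeasurableSet.union
    (NullMeasurableSet.of_null himZ)

/-- Convergence of images for approximately differentiable maps, without injectivity
or sign conditions on the Jacobians (Lemma on convergence of `im_G`). -/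
theorem convergence_of_images_of_approx_diff_maps {N : ℕ} (hN : 2 ≤ N)
    (A : Set (Euc N)) (hA : MeasurableSet A) (hAfin : volume A < ⊤)
    (u : ℕ → Euc N → Euc N) (D : ℕ → Set (Euc N)) (f : ℕ → Euc N → Euc N →L[ℝ] Euc N)
    (htri : ∀ n, ApproxDiffTriple A (D n) (u n) (f n))
    (u₀ : Euc N → Euc N) (D₀ : Set (Euc N)) (f₀ : Euc N → Euc N →L[ℝ] Euc N)
    (htri₀ : ApproxDiffTriple A D₀ u₀ f₀)
    (hint₀ : IntegrableOn (fun x => |(f₀ x).det|) A volume)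
    (hequi : ∀ ε : ℝ≥0∞, 0 < ε → ∃ δ : ℝ≥0∞, 0 < δ ∧ ∀ n, ∀ S : Set (Euc N), S ⊆ A →
      MeasurableSet S → volume S < δ → (∫⁻ x in S, ENNReal.ofReal |(f n x).det|) < ε)
    (E : Set (Euc N)) (hE : MeasurableSet E) (hEA : E ⊆ A)
    (hae : ∀ᵐ x ∂(volume.restrict E), Tendsto (fun n => u n x) atTop (𝓝 (u₀ x)))
    (hliminf : volume (u₀ '' (E ∩ D₀)) ≤ atTop.liminf (fun n => volume (u n '' (E ∩ D n)))) :
    Tendsto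
      (fun n =>
        volume ((u n '' (E ∩ D n) \ u₀ '' (E ∩ D₀)) ∪ (u₀ '' (E ∩ D₀) \ u n '' (E ∩ D n))))
      atTop (𝓝 0) := by
  obtain ⟨hD₀m, hD₀A, hD₀null, hd₀⟩ := htri₀
  have hDnm : ∀ n, MeasurableSet (D n) := fun n => (htri n).1
  have hDnA : ∀ n, D n ⊆ A := fun n => (htri n).2.1
  have hDnnull : ∀ n, volume (A \ D n) = 0 := fun n => (htri n).2.2.1
  have hdn : ∀ n, ∀ x ∈ D n, HasFDerivWithinAt (u n) (f n x) (D n) x := fun n => (htri n).2.2.2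
  have hcont₀ : ContinuousOn u₀ D₀ := contOn_of_deriv hd₀
  have hcontn : ∀ n, ContinuousOn (u n) (D n) := fun n => contOn_of_deriv (hdn n)
  set G : ℕ → Set (Euc N) := fun n => u n '' (E ∩ D n) with hGdef
  set G₀ : Set (Euc N) := u₀ '' (E ∩ D₀) with hG₀def
  -- basic facts
  have hEDnm : ∀ n, MeasurableSet (E ∩ D n) := fun n => hE.inter (hDnm n)
  have hED₀m : MeasurableSet (E ∩ D₀) := hE.inter hD₀m
  have hfinsub : ∀ S : Set (Euc N), S ⊆ A → volume S ≠ ∞ := fun S hS =>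
    ((measure_mono hS).trans_lt hAfin).ne
  have hGnull : ∀ n, NullMeasurableSet (G n) volume := fun n =>
    image_nullMeasurable (hdn n) (hEDnm n) inter_subset_right
      (hfinsub _ (inter_subset_right.trans (hDnA n)))
  have hG₀null : NullMeasurableSet G₀ volume :=
    image_nullMeasurable hd₀ hED₀m inter_subset_right (hfinsub _ (inter_subset_right.trans hD₀A))
  have hG₀fin : volume G₀ < ∞ := by
    have h1 : volume G₀ ≤ ∫⁻ x in E ∩ D₀, ENNReal.ofReal |(f₀ x).det| :=
      image_vol_le hd₀ hED₀m inter_subset_right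
    have h2 : (∫⁻ x in E ∩ D₀, ENNReal.ofReal |(f₀ x).det|) ≤
        ∫⁻ x in A, ENNReal.ofReal |(f₀ x).det| :=
      lintegral_mono_set (inter_subset_right.trans hD₀A)
    have h3 : (∫⁻ x in A, ENNReal.ofReal |(f₀ x).det|) < ∞ := by
      have := hint₀.hasFiniteIntegral
      rw [HasFiniteIntegral] at this
      simpa [Real.enorm_eq_ofReal_abs, abs_abs] using this
    exact (h1.trans h2).trans_lt h3
  have hED₀null : volume (E \ D₀) = 0 :=
    measure_mono_null (diff_subset_diff_left hEA) hD₀null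
  have hEDnnull : ∀ n, volume (E \ D n) = 0 := fun n =>
    measure_mono_null (diff_subset_diff_left hEA) (hDnnull n)
  -- STEP 1 : volume (G n \ G₀) → 0
  have ha : Tendsto (fun n => volume (G n \ G₀)) atTop (𝓝 0) := by
    rw [ENNReal.tendsto_nhds_zero]
    intro ε hε
    set ε₁ := min ε 1 / 2 with hε₁def
    have hε₁pos : 0 < ε₁ :=
      ENNReal.half_pos (by simpa using (lt_min hε zero_lt_one).ne')
    have hsum : ε₁ + ε₁ ≤ ε := by
      rw [hε₁def, ENNReal.add_halves]; exact min_le_left _ _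
    obtain ⟨δ, hδpos, hδ⟩ := hequi ε₁ hε₁pos
    set δ₁ := min δ 1 with hδ₁def
    have hδ₁pos : δ₁ ≠ 0 := by simpa [hδ₁def] using (lt_min hδpos zero_lt_one).ne'
    have hδ₁top : δ₁ ≠ ∞ := ((min_le_right _ _).trans_lt ENNReal.one_lt_top).ne
    have hδ₁le : δ₁ ≤ δ := min_le_left _ _
    set δ₂ := δ₁ / 2 / 2 with hδ₂def
    have hδ₂pos : δ₂ ≠ 0 := (ENNReal.half_pos (ENNReal.half_pos hδ₁pos).ne').ne'
    have hδ₂top : δ₂ ≠ ∞ := by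
      refine ((ENNReal.half_le_self).trans ENNReal.half_le_self).trans_lt ?_ |>.ne
      exact hδ₁top.lt_top
    -- the set of convergence
    set T := toMeasurable (volume.restrict E)
      {x | ¬ Tendsto (fun n => u n x) atTop (𝓝 (u₀ x))} with hTdef
    have hTm : MeasurableSet T := measurableSet_toMeasurable _ _
    have hTnull : volume (T ∩ E) = 0 := by
      have h0 : volume.restrict E T = 0 := by
        rw [hTdef, measure_toMeasurable]; exact ae_iff.mp hae
      rwa [Measure.restrict_apply hTm] at h0
    set C := ((E ∩ D₀) ∩ ⋂ n, D n) \ T with hCdef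
    have hCm : MeasurableSet C :=
      ((hED₀m.inter (MeasurableSet.iInter fun n => hDnm n)).diff hTm)
    have hCE : C ⊆ E := fun x hx => hx.1.1.1
    have hCD₀ : C ⊆ D₀ := fun x hx => hx.1.1.2
    have hCDn : ∀ n, C ⊆ D n := fun n x hx => mem_iInter.mp hx.1.2 n
    have hCA : C ⊆ A := hCE.trans hEA
    have hCtend : ∀ x ∈ C, Tendsto (fun n => u n x) atTop (𝓝 (u₀ x)) := by
      intro x hx
      by_contra h
      exact hx.2 (subset_toMeasurable _ _ h)
    have hECnull : volume (E \ C) = 0 := by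
      have hsub : E \ C ⊆ (E \ D₀) ∪ ((⋃ n, E \ D n) ∪ (T ∩ E)) := by
        intro x hx
        by_cases hxT : x ∈ T
        · exact Or.inr (Or.inr ⟨hxT, hx.1⟩)
        by_cases hxD₀ : x ∈ D₀
        · by_cases hxI : x ∈ ⋂ n, D n
          · exact absurd ⟨⟨⟨hx.1, hxD₀⟩, hxI⟩, hxT⟩ hx.2
          · rcases not_forall.mp (mem_iInter.not.mp hxI) with ⟨n, hn⟩
            exact Or.inr (Or.inl (mem_iUnion.mpr ⟨n, hx.1, hn⟩))
        · exact Or.inl ⟨hx.1, hxD₀⟩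
      refine measure_mono_null hsub ?_
      refine measure_union_null hED₀null (measure_union_null ?_ hTnull)
      rw [measure_iUnion_null_iff]; exact hEDnnull
    -- Egorov with measurable representatives
    have hasm : ∀ n, AEStronglyMeasurable (u n) (volume.restrict C) := fun n =>
      (((hcontn n).mono (hCDn n)).aestronglyMeasurable hCm)
    have hasm₀ : AEStronglyMeasurable u₀ (volume.restrict C) :=
      ((hcont₀.mono hCD₀).aestronglyMeasurable hCm)
    set w : ℕ → Euc N → Euc N := fun n => (hasm n).mk (u n) with hwdef
    set w₀ : Euc N → Euc N := hasm₀.mk u₀ with hw₀def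
    have hweq : ∀ᵐ x ∂(volume.restrict C), (∀ n, u n x = w n x) ∧ u₀ x = w₀ x :=
      ((ae_all_iff.mpr fun n => (hasm n).ae_eq_mk).and hasm₀.ae_eq_mk)
    have hCfin : volume.restrict C C ≠ ∞ := by
      rw [Measure.restrict_apply hCm, inter_self]; exact hfinsub C hCA
    set r : ℝ := δ₂.toReal with hrdef
    have hrpos : 0 < r := ENNReal.toReal_pos hδ₂pos hδ₂top
    obtain ⟨t, htC, htm, htμ, hunif⟩ :=
      tendstoUniformlyOn_of_ae_tendsto (μ := volume.restrict C)
        (fun n => (hasm n).stronglyMeasurable_mk) hasm₀.stronglyMeasurable_mk hCm hCfin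
        (by
          filter_upwards [hweq] with x hx hxC
          have h1 := (hCtend x hxC).congr fun n => hx.1 n
          rwa [hx.2] at h1) hrpos
    have htvol : volume t ≤ δ₂ := by
      rw [Measure.restrict_apply htm, inter_eq_self_of_subset_left htC] at htμ
      rwa [hrdef, ENNReal.ofReal_toReal hδ₂top] at htμ
    -- remove the bad (non-agreement) set
    set Z := toMeasurable (volume.restrict C)
      {x | ¬ ((∀ n, u n x = w n x) ∧ u₀ x = w₀ x)} with hZdef
    have hZm : MeasurableSet Z := measurableSet_toMeasurable _ _
    have hZnull : volume (Z ∩ C) = 0 := by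
      have h0 : volume.restrict C Z = 0 := by
        rw [hZdef, measure_toMeasurable]; exact ae_iff.mp hweq
      rwa [Measure.restrict_apply hZm] at h0
    set F₁ := (C \ t) \ Z with hF₁def
    have hF₁m : MeasurableSet F₁ := (hCm.diff htm).diff hZm
    have hF₁C : F₁ ⊆ C := fun x hx => hx.1.1
    have hCF₁ : volume (C \ F₁) ≤ δ₂ := by
      have hsub : C \ F₁ ⊆ t ∪ (Z ∩ C) := by
        intro x hx
        by_cases hxt : x ∈ t
        · exact Or.inl hxt
        by_cases hxZ : x ∈ Z
        · exact Or.inr ⟨hxZ, hx.1⟩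
        · exact absurd ⟨⟨hx.1, hxt⟩, hxZ⟩ hx.2
      calc volume (C \ F₁) ≤ volume t + volume (Z ∩ C) :=
            (measure_mono hsub).trans (measure_union_le _ _)
        _ ≤ δ₂ := by rw [hZnull, add_zero]; exact htvol
    obtain ⟨F, hFF₁, hFcomp, hF₁F⟩ :=
      hF₁m.exists_isCompact_diff_lt (hfinsub F₁ (hF₁C.trans hCA)) hδ₂pos
    have hFC : F ⊆ C := hFF₁.trans hF₁C
    have hFE : F ⊆ E := hFC.trans hCE
    have hFD₀ : F ⊆ D₀ := hFC.trans hCD₀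
    have hFDn : ∀ n, F ⊆ D n := fun n => hFC.trans (hCDn n)
    have hEF : volume (E \ F) < δ := by
      have hsub : E \ F ⊆ (E \ C) ∪ ((C \ F₁) ∪ (F₁ \ F)) := by
        intro x hx
        by_cases hxC : x ∈ C
        · by_cases hxF₁ : x ∈ F₁
          · exact Or.inr (Or.inr ⟨hxF₁, hx.2⟩)
          · exact Or.inr (Or.inl ⟨hxC, hxF₁⟩)
        · exact Or.inl ⟨hx.1, hxC⟩
      have h1 : volume (E \ F) ≤ volume (E \ C) + (volume (C \ F₁) + volume (F₁ \ F)) :=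
        (measure_mono hsub).trans ((measure_union_le _ _).trans
          (add_le_add_right (measure_union_le _ _) _))
      have h2 : volume (E \ F) ≤ δ₂ + δ₂ := by
        rw [hECnull, zero_add] at h1
        exact h1.trans (add_le_add hCF₁ hF₁F.le)
      have h3 : δ₂ + δ₂ = δ₁ / 2 := ENNReal.add_halves _
      calc volume (E \ F) ≤ δ₁ / 2 := by rwa [h3] at h2
        _ < δ₁ := ENNReal.half_lt_self hδ₁pos hδ₁top
        _ ≤ δ := hδ₁le
    -- the compact image and its thickening
    set K := u₀ '' F with hKdef
    have hKcomp : IsCompact K := hFcomp.image_of_continuousOn (hcont₀.mono hFD₀)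
    have hKG₀ : K ⊆ G₀ := image_mono fun x hx => ⟨hFE hx, hFD₀ hx⟩
    have hKfin : volume K ≠ ∞ := hKcomp.measure_lt_top.ne
    obtain ⟨r₀, hr₀pos, hr₀⟩ :
        ∃ r₀ : ℝ, 0 < r₀ ∧ volume (Metric.cthickening r₀ K) ≤ volume K + ε₁ := by
      have h1 : Tendsto (fun s : ℝ => volume (Metric.cthickening s K)) (𝓝[>] 0)
          (𝓝 (volume K)) :=
        (tendsto_measure_cthickening_of_isCompact hKcomp).mono_left nhdsWithin_le_nhds
      have h2 : ∀ᶠ s in 𝓝[>] (0:ℝ), volume (Metric.cthickening s K) < volume K + ε₁ :=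
        h1.eventually_lt_const (ENNReal.lt_add_right hKfin hε₁pos.ne')
      obtain ⟨s, hs1, hs2⟩ := (h2.and self_mem_nhdsWithin).exists
      exact ⟨s, hs2, hs1.le⟩
    have hexcess : volume (Metric.cthickening r₀ K \ G₀) ≤ ε₁ := by
      have h1 : volume (Metric.cthickening r₀ K \ K) ≤ ε₁ := by
        rw [measure_diff (Metric.self_subset_cthickening K) hKcomp.nullMeasurableSet hKfin]
        exact tsub_le_iff_left.mpr hr₀
      exact (measure_mono (diff_subset_diff_right hKG₀)).trans h1
    -- uniform convergence of the original functions on F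
    have huc : ∀ᶠ n in atTop, ∀ x ∈ F, dist (u₀ x) (u n x) < r₀ := by
      have h1 := (Metric.tendstoUniformlyOn_iff.mp hunif) r₀ hr₀pos
      filter_upwards [h1] with n hn x hxF
      have hx1 : x ∈ C \ t := (hFF₁ hxF).1
      have hx2 : x ∉ Z := (hFF₁ hxF).2
      have heq : (∀ m, u m x = w m x) ∧ u₀ x = w₀ x := by
        by_contra h
        exact hx2 (subset_toMeasurable _ _ h)
      rw [heq.2, heq.1 n]
      exact hn x hx1
    filter_upwards [huc] with n hn
    have hsub : G n \ G₀ ⊆ (Metric.cthickening r₀ K \ G₀) ∪ u n '' ((E ∩ D n) \ F) := by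
      rintro y ⟨⟨x, hx, rfl⟩, hyG₀⟩
      by_cases hxF : x ∈ F
      · refine Or.inl ⟨Metric.mem_cthickening_of_dist_le _ _ _ _
          (mem_image_of_mem u₀ hxF) ?_, hyG₀⟩
        rw [dist_comm]
        exact (hn x hxF).le
      · exact Or.inr (mem_image_of_mem _ ⟨hx, hxF⟩)
    have hS : volume (u n '' ((E ∩ D n) \ F)) ≤ ε₁ := by
      have hSm : MeasurableSet ((E ∩ D n) \ F) := (hEDnm n).diff hFcomp.measurableSet
      have hSD : (E ∩ D n) \ F ⊆ D n := fun x hx => hx.1.2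
      have hSA : (E ∩ D n) \ F ⊆ A := fun x hx => hEA hx.1.1
      have hsub3 : (E ∩ D n) \ F ⊆ E \ F := fun x hx => ⟨hx.1.1, hx.2⟩
      have hSvol : volume ((E ∩ D n) \ F) < δ := (measure_mono hsub3).trans_lt hEF
      exact (image_vol_le (hdn n) hSm hSD).trans (hδ n _ hSA hSm hSvol).le
    calc volume (G n \ G₀)
        ≤ volume (Metric.cthickening r₀ K \ G₀) + volume (u n '' ((E ∩ D n) \ F)) :=
          (measure_mono hsub).trans (measure_union_le _ _)
      _ ≤ ε₁ + ε₁ := add_le_add hexcess hS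
      _ ≤ ε := hsum
  -- STEP 2 : volume (G₀ \ G n) → 0
  have hb : Tendsto (fun n => volume (G₀ \ G n)) atTop (𝓝 0) := by
    rw [ENNReal.tendsto_nhds_zero]
    intro ε hε
    by_cases hG0 : volume G₀ ≤ ε
    · exact Eventually.of_forall fun n => (measure_mono diff_subset).trans hG0
    push_neg at hG0
    have hG₀ne : volume G₀ ≠ 0 := fun h => by simp [h] at hG0
    set c := min ε 1 / 2 with hcdef
    have hcpos : c ≠ 0 := (ENNReal.half_pos (by simpa using (lt_min hε zero_lt_one).ne')).ne'
    have h1 : ∀ᶠ n in atTop, volume (G n \ G₀) ≤ c :=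
      (ENNReal.tendsto_nhds_zero.mp ha) c (pos_iff_ne_zero.mpr hcpos)
    have h2 : ∀ᶠ n in atTop, volume G₀ - c < volume (G n) :=
      Filter.eventually_lt_of_lt_liminf
        ((ENNReal.sub_lt_self hG₀fin.ne hG₀ne hcpos).trans_le hliminf)
    filter_upwards [h1, h2] with n hn1 hn2
    have hsub2 : G n ⊆ (G₀ ∩ G n) ∪ (G n \ G₀) := by
      intro y hy
      by_cases h : y ∈ G₀
      · exact Or.inl ⟨h, hy⟩
      · exact Or.inr ⟨hy, h⟩
    have hGn_le : volume (G n) ≤ volume (G₀ ∩ G n) + volume (G n \ G₀) :=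
      (measure_mono hsub2).trans (measure_union_le _ _)
    have key : volume G₀ - (c + c) ≤ volume (G₀ ∩ G n) := by
      have h3 : volume (G n) - c ≤ volume (G₀ ∩ G n) :=
        tsub_le_iff_right.mpr (hGn_le.trans (add_le_add_right hn1 _))
      calc volume G₀ - (c + c) = volume G₀ - c - c := (tsub_tsub _ _ _).symm
        _ ≤ volume (G n) - c := tsub_le_tsub_right hn2.le c
        _ ≤ volume (G₀ ∩ G n) := h3
    have hdiff : volume (G₀ \ G n) = volume G₀ - volume (G₀ ∩ G n) := by
      have h4 : G₀ \ G n = G₀ \ (G₀ ∩ G n) := by rw [Set.diff_self_inter]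
      rw [h4]
      exact measure_diff inter_subset_left (hG₀null.inter (hGnull n))
        ((measure_mono inter_subset_left).trans_lt hG₀fin).ne
    rw [hdiff]
    calc volume G₀ - volume (G₀ ∩ G n)
        ≤ volume G₀ - (volume G₀ - (c + c)) := tsub_le_tsub_left key _
      _ ≤ c + c := tsub_le_iff_right.mpr le_add_tsub
      _ ≤ ε := by rw [hcdef, ENNReal.add_halves]; exact min_le_left _ _
  -- conclusion
  have hsum : Tendsto (fun n => volume (G n \ G₀) + volume (G₀ \ G n)) atTop (𝓝 0) := by
    simpa using ha.add hb
  exact tendsto_of_tendsto_of_tendsto_of_le_of_le tendsto_const_nhds hsum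
    (fun n => zero_le) (fun n => measure_union_le _ _)
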